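/- Let W₁ and W₂ be closed half-spaces in ℝ³ whose boundary planes Π₁ and Π₂ are distinct and intersect in a line L, with 0 in the interior of W₁ ∩ W₂, and set Aᵢ = Πᵢ ∩ W₃₋ᵢ. Assume the crossed-edge condition: the orthogonal projection o₁ of 0 onto Π₁ satisfies o₁ ∉ int W₂ and o₁ ∉ L. Let q ∈ L and set v* = (q − o₁)/‖q − o₁‖. Then there exists ε > 0 with q + t·v* ∈ A₁ for all t ∈ [0, ε], ⟪q, v*⟫ = ‖q − o₁‖ > 0, and every unit vector v ≠ v* for which there exists ε > 0 with q + t·v ∈ A₁ ∪ A₂ for all t ∈ [0, ε] satisfies ⟪q, v⟫ < ⟪q, v*⟫. (This establishes that at a point of a crossed edge the unique direction of steepest ascent of the radial distance function points into the face A₁, in the direction of the in-face gradient q − o₁.) -/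

import Mathlib

open scoped RealInnerProductSpace

/-- at a point `q` of a crossed edge (crossed from the `A₂` side to the `A₁`
side), the unique direction of steepest ascent of the radial distance function points into
the face `A₁`, in the direction of the in-face gradient `q - o₁`. -/
theorem crossed_edge_steepest_ascent
    (n₁ n₂ : EuclideanSpace ℝ (Fin 3)) (c₁ c₂ : ℝ) (hn₁ : n₁ ≠ 0) (hn₂ : n₂ ≠ 0)
    (W₁ W₂ B₁ B₂ A₁ A₂ : Set (EuclideanSpace ℝ (Fin 3)))
    (hW₁ : W₁ = {x | ⟪n₁, x⟫ ≤ c₁}) (hW₂ : W₂ = {x | ⟪n₂, x⟫ ≤ c₂})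
    (hB₁ : B₁ = {x | ⟪n₁, x⟫ = c₁}) (hB₂ : B₂ = {x | ⟪n₂, x⟫ = c₂})
    (hA₁ : A₁ = B₁ ∩ W₂) (hA₂ : A₂ = B₂ ∩ W₁)
    (hne : B₁ ≠ B₂) (hmeet : (B₁ ∩ B₂).Nonempty)
    (h0 : (0 : EuclideanSpace ℝ (Fin 3)) ∈ interior (W₁ ∩ W₂))
    -- `o₁` is the orthogonal projection of `0` onto `B₁`
    (o₁ : EuclideanSpace ℝ (Fin 3)) (ho₁ : o₁ ∈ B₁)
    (hperp₁ : ∀ x ∈ B₁, ⟪(0 : EuclideanSpace ℝ (Fin 3)) - o₁, x - o₁⟫ = 0)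
    -- the crossed-edge condition
    (hcross : o₁ ∉ interior W₂) (ho₁L : o₁ ∉ B₁ ∩ B₂)
    (q : EuclideanSpace ℝ (Fin 3)) (hq : q ∈ B₁ ∩ B₂)
    (v' : EuclideanSpace ℝ (Fin 3)) (hv' : v' = ‖q - o₁‖⁻¹ • (q - o₁)) :
    (∃ ε > (0 : ℝ), ∀ t ∈ Set.Icc (0 : ℝ) ε, q + t • v' ∈ A₁) ∧
    ⟪q, v'⟫ = ‖q - o₁‖ ∧ 0 < ‖q - o₁‖ ∧
    (∀ v : EuclideanSpace ℝ (Fin 3), ‖v‖ = 1 → v ≠ v' →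
      (∃ ε > (0 : ℝ), ∀ t ∈ Set.Icc (0 : ℝ) ε, q + t • v ∈ A₁ ∪ A₂) →
      ⟪q, v⟫ < ⟪q, v'⟫) := by
  subst hW₁ hW₂ hB₁ hB₂ hA₁ hA₂ hv'
  obtain ⟨hq1, hq2⟩ := hq
  simp only [Set.mem_setOf_eq] at hq1 hq2 ho₁
  have hn₁pos : (0:ℝ) < ‖n₁‖ := norm_pos_iff.mpr hn₁
  -- c₁ > 0
  have hc₁ : 0 < c₁ := by
    have h0' : (0 : EuclideanSpace ℝ (Fin 3)) ∈
        interior {x : EuclideanSpace ℝ (Fin 3) | ⟪n₁, x⟫ ≤ c₁} :=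
      interior_mono Set.inter_subset_left h0
    rw [mem_interior_iff_mem_nhds, Metric.mem_nhds_iff] at h0'
    obtain ⟨δ, hδ, hball⟩ := h0'
    have hxmem : (δ / (2 * ‖n₁‖)) • n₁ ∈
        Metric.ball (0 : EuclideanSpace ℝ (Fin 3)) δ := by
      rw [Metric.mem_ball, dist_zero_right, norm_smul, Real.norm_eq_abs,
        abs_of_pos (by positivity), div_mul_eq_mul_div, div_lt_iff₀ (by positivity)]
      nlinarith
    have h1 := hball hxmem
    simp only [Set.mem_setOf_eq, real_inner_smul_right,
      real_inner_self_eq_norm_sq] at h1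
    have h2 : 0 < δ / (2 * ‖n₁‖) * ‖n₁‖ ^ 2 := by positivity
    linarith
  -- vectors orthogonal to n₁ are orthogonal to o₁
  have key : ∀ u : EuclideanSpace ℝ (Fin 3), ⟪n₁, u⟫ = 0 → ⟪o₁, u⟫ = 0 := by
    intro u hu
    have hmem : o₁ + u ∈ {x : EuclideanSpace ℝ (Fin 3) | ⟪n₁, x⟫ = c₁} := by
      simp only [Set.mem_setOf_eq, inner_add_right, ho₁, hu, add_zero]
    have h := hperp₁ _ hmem
    rw [zero_sub, add_sub_cancel_left, inner_neg_left, neg_eq_zero] at h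
    exact h
  -- o₁ is a multiple of n₁
  have ho₁eq : o₁ = (c₁ / ‖n₁‖ ^ 2) • n₁ := by
    have hw1 : ⟪n₁, o₁ - (c₁ / ‖n₁‖ ^ 2) • n₁⟫ = 0 := by
      rw [inner_sub_right, real_inner_smul_right, real_inner_self_eq_norm_sq, ho₁]
      field_simp
      ring
    have ho₁w := key _ hw1
    have hww : ⟪o₁ - (c₁ / ‖n₁‖ ^ 2) • n₁, o₁ - (c₁ / ‖n₁‖ ^ 2) • n₁⟫ = (0:ℝ) := by
      rw [inner_sub_left, real_inner_smul_left, ho₁w, hw1]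
      ring
    have := inner_self_eq_zero.mp hww
    exact (sub_eq_zero.mp this)
  have ho₁inner : ∀ x : EuclideanSpace ℝ (Fin 3),
      ⟪o₁, x⟫ = (c₁ / ‖n₁‖ ^ 2) * ⟪n₁, x⟫ := by
    intro x; rw [ho₁eq, real_inner_smul_left]
  -- q ≠ o₁
  have ho₁2 : ⟪n₂, o₁⟫ ≠ c₂ := fun h => ho₁L ⟨ho₁, h⟩
  have hqo : q - o₁ ≠ 0 := by
    intro h
    exact ho₁2 (by rw [← sub_eq_zero.mp h]; exact hq2)
  have hnorm : 0 < ‖q - o₁‖ := norm_pos_iff.mpr hqo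
  -- crossed edge: ⟪n₂, o₁⟫ ≥ c₂
  have hcr : c₂ ≤ ⟪n₂, o₁⟫ := by
    by_contra h
    push_neg at h
    have hopen : IsOpen {x : EuclideanSpace ℝ (Fin 3) | ⟪n₂, x⟫ < c₂} :=
      isOpen_lt (Continuous.inner continuous_const continuous_id) continuous_const
    have hsub : {x : EuclideanSpace ℝ (Fin 3) | ⟪n₂, x⟫ < c₂} ⊆
        interior {x : EuclideanSpace ℝ (Fin 3) | ⟪n₂, x⟫ ≤ c₂} :=
      interior_maximal (fun x (hx : ⟪n₂, x⟫ < c₂) => le_of_lt hx) hopen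
    exact hcross (hsub h)
  -- inner products with q - o₁
  have hd1 : ⟪n₁, q - o₁⟫ = 0 := by rw [inner_sub_right, hq1, ho₁, sub_self]
  have hd2 : ⟪n₂, q - o₁⟫ ≤ 0 := by
    rw [inner_sub_right, hq2]; linarith
  have hperpq : ⟪o₁, q - o₁⟫ = 0 := key _ hd1
  -- ⟪q, v'⟫ = ‖q - o₁‖
  have hqv' : ⟪q, ‖q - o₁‖⁻¹ • (q - o₁)⟫ = ‖q - o₁‖ := by
    rw [real_inner_smul_right]
    have h1 : ⟪q, q - o₁⟫ = ‖q - o₁‖ ^ 2 := by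
      have h2 : ⟪q, q - o₁⟫ = ⟪q - o₁, q - o₁⟫ + ⟪o₁, q - o₁⟫ := by
        rw [← inner_add_left, sub_add_cancel]
      rw [h2, hperpq, real_inner_self_eq_norm_sq, add_zero]
    rw [h1]
    field_simp
  refine ⟨⟨1, one_pos, ?_⟩, hqv', hnorm, ?_⟩
  · intro t ht
    constructor
    · show ⟪n₁, _⟫ = c₁
      rw [inner_add_right, real_inner_smul_right, real_inner_smul_right, hd1]
      simp [hq1]
    · show ⟪n₂, _⟫ ≤ c₂
      rw [inner_add_right, real_inner_smul_right, real_inner_smul_right, hq2]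
      have h1 : ‖q - o₁‖⁻¹ * ⟪n₂, q - o₁⟫ ≤ 0 :=
        mul_nonpos_iff.mpr (Or.inl ⟨inv_nonneg.mpr hnorm.le, hd2⟩)
      have h2 : t * (‖q - o₁‖⁻¹ * ⟪n₂, q - o₁⟫) ≤ 0 :=
        mul_nonpos_iff.mpr (Or.inl ⟨ht.1, h1⟩)
      linarith
  · rintro v hv hvne ⟨ε, hε, hmem⟩
    have h := hmem ε ⟨le_of_lt hε, le_refl _⟩
    have hn₁v : ⟪n₁, v⟫ ≤ 0 := by
      rcases h with h | h
      · have h1 : ⟪n₁, q + ε • v⟫ = c₁ := h.1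
        rw [inner_add_right, real_inner_smul_right, hq1] at h1
        have h2 : ε * ⟪n₁, v⟫ = 0 := by linarith
        rcases mul_eq_zero.mp h2 with h' | h'
        · exact absurd h' (ne_of_gt hε)
        · rw [h']
      · have h1 : ⟪n₁, q + ε • v⟫ ≤ c₁ := h.2
        rw [inner_add_right, real_inner_smul_right, hq1] at h1
        by_contra h'
        push_neg at h'
        nlinarith [mul_pos hε h']
    -- strict Cauchy-Schwarz
    have hcs : ⟪q - o₁, v⟫ < ‖q - o₁‖ := by
      rcases lt_or_eq_of_le (by
        calc ⟪q - o₁, v⟫ ≤ ‖q - o₁‖ * ‖v‖ := real_inner_le_norm _ _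
        _ = ‖q - o₁‖ := by rw [hv, mul_one]) with h' | h'
      · exact h'
      · exfalso
        have h2 : ⟪q - o₁, v⟫ = ‖q - o₁‖ * ‖v‖ := by rw [hv, mul_one, h']
        rw [inner_eq_norm_mul_iff_real, hv, one_smul] at h2
        apply hvne
        rw [h2, norm_smul, Real.norm_eq_abs, abs_of_pos hnorm, hv, mul_one,
          smul_smul, inv_mul_cancel₀ (ne_of_gt hnorm), one_smul]
    have hsplit : ⟪q, v⟫ = ⟪q - o₁, v⟫ + ⟪o₁, v⟫ := by
      rw [← inner_add_left, sub_add_cancel]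
    have ho₁v : ⟪o₁, v⟫ ≤ 0 := by
      rw [ho₁inner]
      have h3 : 0 < c₁ / ‖n₁‖ ^ 2 := by positivity
      exact mul_nonpos_iff.mpr (Or.inl ⟨h3.le, hn₁v⟩)
    rw [hqv', hsplit]
    linarith
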